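/- Let T be an essentially normal operator on a Hilbert space H that is upper triangular 2×2 with respect to an orthogonal decomposition H = H1 ⊕ H2, say T = [[A, B],[0, C]], with AB = BC. Suppose in the Calkin algebra Q, the only element y with Q(C)·y = y·Q(A) that also lies in the range of the map z ↦ Q(C)z - zQ(A) is y = 0 in the positive case (equivalently, (A, C) satisfies Property (H) modulo compacts). Then B is a compact operator and A, C are essentially normal. -/
import Mathlib


open ContinuousLinearMap

local notation "⟪" x ", " y "⟫" => @inner ℂ _ _ x y

/-- If `R†R` is compact then `R` is compact. -/
private lemma isCompactOperator_of_adjoint_comp {E F : Type*} [NormedAddCommGroup E]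
    [InnerProductSpace ℂ E] [CompleteSpace E] [NormedAddCommGroup F] [InnerProductSpace ℂ F]
    [CompleteSpace F] (R : E →L[ℂ] F)
    (h : IsCompactOperator ⇑(ContinuousLinearMap.adjoint R ∘L R)) :
    IsCompactOperator ⇑R := by
  classical
  set G := ContinuousLinearMap.adjoint R ∘L R with hG
  have key : ∀ v : E, ‖R v‖ ^ 2 ≤ ‖G v‖ * ‖v‖ := by
    intro v
    have h1 : (‖R v‖ : ℝ) ^ 2 = RCLike.re (⟪G v, v⟫) := by
      rw [hG, ContinuousLinearMap.coe_comp', Function.comp_apply,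
        ContinuousLinearMap.adjoint_inner_left, inner_self_eq_norm_sq]
    rw [h1]
    calc RCLike.re (⟪G v, v⟫) ≤ ‖(⟪G v, v⟫)‖ := RCLike.re_le_norm _
    _ ≤ ‖G v‖ * ‖v‖ := norm_inner_le_norm _ _
  have h' : IsCompactOperator ⇑(G.toLinearMap) := h
  have hR' : IsCompactOperator ⇑(R.toLinearMap) → IsCompactOperator ⇑R := fun H => H
  apply hR'
  rw [isCompactOperator_iff_isCompact_closure_image_ball (𝕜₁ := ℂ) R.toLinearMap one_pos]
  refine TotallyBounded.isCompact_of_isClosed (totallyBounded_closure.mpr ?_) isClosed_closure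
  rw [Metric.totallyBounded_iff]
  intro ε hε
  have hGtb : TotallyBounded (⇑G.toLinearMap '' Metric.ball 0 1) :=
    (h'.isCompact_closure_image_ball (𝕜₁ := ℂ) 1).totallyBounded.subset subset_closure
  rw [Metric.totallyBounded_iff] at hGtb
  obtain ⟨t, htf, hcov⟩ := hGtb (ε ^ 2 / 4) (by positivity)
  set c : E → E := fun w =>
    if hw : ∃ u ∈ Metric.ball (0 : E) 1, G u ∈ Metric.ball w (ε ^ 2 / 4) then hw.choose else 0
    with hc
  refine ⟨(fun w => R (c w)) '' t, htf.image _, ?_⟩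
  rintro _ ⟨x, hx, rfl⟩
  have hx1 : ‖x‖ < 1 := mem_ball_zero_iff.mp hx
  obtain ⟨w, hwt, hGx⟩ : ∃ w ∈ t, G x ∈ Metric.ball w (ε ^ 2 / 4) := by
    have := hcov ⟨x, hx, rfl⟩
    simpa using this
  have hex : ∃ u ∈ Metric.ball (0 : E) 1, G u ∈ Metric.ball w (ε ^ 2 / 4) := ⟨x, hx, hGx⟩
  have hcw : c w ∈ Metric.ball (0 : E) 1 ∧ G (c w) ∈ Metric.ball w (ε ^ 2 / 4) := by
    rw [hc]; simp only; rw [dif_pos hex]; exact ⟨hex.choose_spec.1, hex.choose_spec.2⟩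
  have hnorm : ‖R x - R (c w)‖ < ε := by
    have hGd : ‖G x - G (c w)‖ < ε ^ 2 / 2 := by
      have h1 : dist (G x) w < ε ^ 2 / 4 := hGx
      have h2 : dist (G (c w)) w < ε ^ 2 / 4 := hcw.2
      calc ‖G x - G (c w)‖ = dist (G x) (G (c w)) := (dist_eq_norm _ _).symm
      _ ≤ dist (G x) w + dist w (G (c w)) := dist_triangle _ _ _
      _ < ε ^ 2 / 4 + ε ^ 2 / 4 := by rw [dist_comm w]; exact add_lt_add h1 h2
      _ = ε ^ 2 / 2 := by ring
    have hd : ‖x - c w‖ ≤ 2 := by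
      have h2 : ‖c w‖ < 1 := mem_ball_zero_iff.mp hcw.1
      calc ‖x - c w‖ ≤ ‖x‖ + ‖c w‖ := norm_sub_le _ _
      _ ≤ 2 := by linarith
    have hsq : ‖R x - R (c w)‖ ^ 2 < ε ^ 2 := by
      calc ‖R x - R (c w)‖ ^ 2 = ‖R (x - c w)‖ ^ 2 := by rw [map_sub]
      _ ≤ ‖G (x - c w)‖ * ‖x - c w‖ := key _
      _ = ‖G x - G (c w)‖ * ‖x - c w‖ := by rw [map_sub]
      _ ≤ ‖G x - G (c w)‖ * 2 := mul_le_mul_of_nonneg_left hd (norm_nonneg _)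
      _ < (ε ^ 2 / 2) * 2 := by
            apply mul_lt_mul_of_pos_right hGd; norm_num
      _ = ε ^ 2 := by ring
    exact lt_of_pow_lt_pow_left₀ 2 (le_of_lt hε) hsq
  refine Set.mem_iUnion₂.mpr ⟨R (c w), ⟨w, hwt, rfl⟩, ?_⟩
  rw [Metric.mem_ball, dist_eq_norm]
  exact hnorm

/-- Block decomposition of a product of operators. -/
private lemma block_comp {E F G U V : Type*} [NormedAddCommGroup E] [NormedSpace ℂ E]
    [NormedAddCommGroup F] [NormedSpace ℂ F] [NormedAddCommGroup G] [NormedSpace ℂ G]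
    [NormedAddCommGroup U] [NormedSpace ℂ U] [NormedAddCommGroup V] [NormedSpace ℂ V]
    (S1 S2 : E →L[ℂ] E) (p : E →L[ℂ] F) (j : G →L[ℂ] E)
    (q1 : E →L[ℂ] U) (i1 : U →L[ℂ] E) (q2 : E →L[ℂ] V) (i2 : V →L[ℂ] E)
    (hres : ∀ v, i1 (q1 v) + i2 (q2 v) = v) :
    p ∘L ((S1 ∘L S2) ∘L j) =
      (p ∘L (S1 ∘L i1)) ∘L (q1 ∘L (S2 ∘L j)) + (p ∘L (S1 ∘L i2)) ∘L (q2 ∘L (S2 ∘L j)) := by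
  ext x
  simp only [ContinuousLinearMap.comp_apply, ContinuousLinearMap.add_apply]
  conv_lhs => rw [← hres (S2 (j x))]
  rw [map_add, map_add]

set_option maxHeartbeats 1000000 in
/-- For an essentially normal upper-triangular `2×2` operator `T = [[A,B],[0,C]]` with
`AB = BC`, assuming Property (H) modulo the compacts for the pair `(A, C)`, the corner
`B` is compact and the diagonal entries `A`, `C` are essentially normal. -/
theorem essentiallyNormal_upperTriangular_corner_compact
    {H1 H2 : Type*} [NormedAddCommGroup H1] [InnerProductSpace ℂ H1] [CompleteSpace H1]
    [NormedAddCommGroup H2] [InnerProductSpace ℂ H2] [CompleteSpace H2]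
    (A : H1 →L[ℂ] H1) (C : H2 →L[ℂ] H2) (B : H2 →L[ℂ] H1)
    (T : WithLp 2 (H1 × H2) →L[ℂ] WithLp 2 (H1 × H2))
    (hT : ∀ v : WithLp 2 (H1 × H2),
      WithLp.equiv 2 (H1 × H2) (T v) =
        (A (WithLp.equiv 2 (H1 × H2) v).1 + B (WithLp.equiv 2 (H1 × H2) v).2,
          C (WithLp.equiv 2 (H1 × H2) v).2))
    (hAB : A ∘L B = B ∘L C)
    (hEN : IsCompactOperator ⇑(adjoint T ∘L T - T ∘L adjoint T))
    (hH : ∀ y : H1 →L[ℂ] H2,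
      IsCompactOperator ⇑(C ∘L y - y ∘L A) →
      (∃ z : H1 →L[ℂ] H2, IsCompactOperator ⇑(y - (C ∘L z - z ∘L A))) →
      IsCompactOperator ⇑y) :
    IsCompactOperator ⇑B ∧
      IsCompactOperator ⇑(adjoint A ∘L A - A ∘L adjoint A) ∧
      IsCompactOperator ⇑(adjoint C ∘L C - C ∘L adjoint C) := by
  classical
  set e : WithLp 2 (H1 × H2) ≃L[ℂ] H1 × H2 := WithLp.prodContinuousLinearEquiv 2 ℂ H1 H2 with he
  set P1 : WithLp 2 (H1 × H2) →L[ℂ] H1 :=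
    (fst ℂ H1 H2) ∘L (e : WithLp 2 (H1 × H2) →L[ℂ] H1 × H2) with hP1def
  set P2 : WithLp 2 (H1 × H2) →L[ℂ] H2 :=
    (snd ℂ H1 H2) ∘L (e : WithLp 2 (H1 × H2) →L[ℂ] H1 × H2) with hP2def
  set I1 : H1 →L[ℂ] WithLp 2 (H1 × H2) :=
    (e.symm : H1 × H2 →L[ℂ] WithLp 2 (H1 × H2)) ∘L inl ℂ H1 H2 with hI1def
  set I2 : H2 →L[ℂ] WithLp 2 (H1 × H2) :=
    (e.symm : H1 × H2 →L[ℂ] WithLp 2 (H1 × H2)) ∘L inr ℂ H1 H2 with hI2def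
  -- resolution of identity
  have hres : ∀ v : WithLp 2 (H1 × H2), I1 (P1 v) + I2 (P2 v) = v := by
    intro v
    have h0 : I1 (P1 v) + I2 (P2 v) = e.symm ((e v).1, 0) + e.symm (0, (e v).2) := rfl
    rw [h0, ← map_add, Prod.mk_add_mk, add_zero, zero_add]
    exact e.symm_apply_apply v
  -- adjoints of injections/projections
  have hadjI1 : adjoint I1 = P1 := by
    refine ((eq_adjoint_iff P1 I1).mpr ?_).symm
    intro x y
    rw [WithLp.prod_inner_apply]
    show ⟪(e x).1, y⟫ = ⟪(e x).1, y⟫ + ⟪(e x).2, (0 : H2)⟫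
    rw [inner_zero_right, add_zero]
  have hadjI2 : adjoint I2 = P2 := by
    refine ((eq_adjoint_iff P2 I2).mpr ?_).symm
    intro x y
    rw [WithLp.prod_inner_apply]
    show ⟪(e x).2, y⟫ = ⟪(e x).1, (0 : H1)⟫ + ⟪(e x).2, y⟫
    rw [inner_zero_right, zero_add]
  have hadjP1 : adjoint P1 = I1 := by rw [← hadjI1, adjoint_adjoint]
  have hadjP2 : adjoint P2 = I2 := by rw [← hadjI2, adjoint_adjoint]
  -- blocks of T
  have hT11 : P1 ∘L (T ∘L I1) = A := by
    ext x
    show (WithLp.equiv 2 (H1 × H2) (T (I1 x))).1 = A x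
    rw [hT]
    show A x + B 0 = A x
    rw [map_zero, add_zero]
  have hT21 : P2 ∘L (T ∘L I1) = 0 := by
    ext x
    show (WithLp.equiv 2 (H1 × H2) (T (I1 x))).2 = 0
    rw [hT]
    show C 0 = 0
    rw [map_zero]
  have hT12 : P1 ∘L (T ∘L I2) = B := by
    ext x
    show (WithLp.equiv 2 (H1 × H2) (T (I2 x))).1 = B x
    rw [hT]
    show A 0 + B x = B x
    rw [map_zero, zero_add]
  have hT22 : P2 ∘L (T ∘L I2) = C := by
    ext x
    show (WithLp.equiv 2 (H1 × H2) (T (I2 x))).2 = C x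
    rw [hT]
    rfl
  -- blocks of adjoint T
  set Td := adjoint T with hTd
  have hS11 : P1 ∘L (Td ∘L I1) = adjoint A := by
    rw [← hT11, adjoint_comp, adjoint_comp, hadjI1, hadjP1]
    exact (comp_assoc _ _ _).symm
  have hS21 : P2 ∘L (Td ∘L I1) = adjoint B := by
    rw [← hT12, adjoint_comp, adjoint_comp, hadjI2, hadjP1]
    exact (comp_assoc _ _ _).symm
  have hS12 : P1 ∘L (Td ∘L I2) = adjoint (0 : H1 →L[ℂ] H2) := by
    rw [← hT21, adjoint_comp, adjoint_comp, hadjI1, hadjP2]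
    exact (comp_assoc _ _ _).symm
  have hS22 : P2 ∘L (Td ∘L I2) = adjoint C := by
    rw [← hT22, adjoint_comp, adjoint_comp, hadjI2, hadjP2]
    exact (comp_assoc _ _ _).symm
  have hzero : adjoint (0 : H1 →L[ℂ] H2) = 0 := by
    refine ((eq_adjoint_iff 0 (0 : H1 →L[ℂ] H2)).mpr ?_).symm
    intro x y
    simp
  rw [hzero] at hS12
  -- blocks of the self-commutator
  set D := Td ∘L T - T ∘L Td with hDdef
  have hTT1 : P2 ∘L ((Td ∘L T) ∘L I1) = adjoint B ∘L A := by
    rw [block_comp Td T P2 I1 P1 I1 P2 I2 hres, hS21, hS22, hT11, hT21, comp_zero, add_zero]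
  have hTT2 : P2 ∘L ((T ∘L Td) ∘L I1) = C ∘L adjoint B := by
    rw [block_comp T Td P2 I1 P1 I1 P2 I2 hres, hT21, hT22, hS11, hS21, zero_comp, zero_add]
  have hTT3 : P2 ∘L ((Td ∘L T) ∘L I2) = adjoint B ∘L B + adjoint C ∘L C := by
    rw [block_comp Td T P2 I2 P1 I1 P2 I2 hres, hS21, hS22, hT12, hT22]
  have hTT4 : P2 ∘L ((T ∘L Td) ∘L I2) = C ∘L adjoint C := by
    rw [block_comp T Td P2 I2 P1 I1 P2 I2 hres, hT21, hT22, hS12, hS22, zero_comp, zero_add]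
  have hTT5 : P1 ∘L ((Td ∘L T) ∘L I1) = adjoint A ∘L A := by
    rw [block_comp Td T P1 I1 P1 I1 P2 I2 hres, hS11, hS12, hT11, hT21, zero_comp, add_zero]
  have hTT6 : P1 ∘L ((T ∘L Td) ∘L I1) = A ∘L adjoint A + B ∘L adjoint B := by
    rw [block_comp T Td P1 I1 P1 I1 P2 I2 hres, hT11, hT12, hS11, hS21]
  have hD21 : P2 ∘L (D ∘L I1) = adjoint B ∘L A - C ∘L adjoint B := by
    rw [hDdef, sub_comp, comp_sub, hTT1, hTT2]
  have hD22 : P2 ∘L (D ∘L I2) = (adjoint B ∘L B + adjoint C ∘L C) - C ∘L adjoint C := by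
    rw [hDdef, sub_comp, comp_sub, hTT3, hTT4]
  have hD11 : P1 ∘L (D ∘L I1) = adjoint A ∘L A - (A ∘L adjoint A + B ∘L adjoint B) := by
    rw [hDdef, sub_comp, comp_sub, hTT5, hTT6]
  -- compactness of the blocks
  have hDcpt : IsCompactOperator ⇑D := hEN
  have hblockcpt1 : IsCompactOperator ⇑(adjoint B ∘L A - C ∘L adjoint B) := by
    rw [← hD21]
    simp only [coe_comp']
    exact (hDcpt.comp_clm I1).clm_comp P2
  have hK2 : IsCompactOperator ⇑((adjoint B ∘L B + adjoint C ∘L C) - C ∘L adjoint C) := by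
    rw [← hD22]
    simp only [coe_comp']
    exact (hDcpt.comp_clm I2).clm_comp P2
  have hK3 : IsCompactOperator ⇑(adjoint A ∘L A - (A ∘L adjoint A + B ∘L adjoint B)) := by
    rw [← hD11]
    simp only [coe_comp']
    exact (hDcpt.comp_clm I1).clm_comp P1
  have hK1 : IsCompactOperator ⇑(C ∘L adjoint B - adjoint B ∘L A) := by
    rw [show C ∘L adjoint B - adjoint B ∘L A = -(adjoint B ∘L A - C ∘L adjoint B) from
      (neg_sub _ _).symm, ContinuousLinearMap.coe_neg']
    exact hblockcpt1.neg
  -- apply Property (H) to y = B† B B†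
  set Bs := adjoint B with hBs
  set y : H1 →L[ℂ] H2 := Bs ∘L (B ∘L Bs) with hy
  have hABpt : ∀ u, A (B u) = B (C u) := by
    intro u
    have := ContinuousLinearMap.ext_iff.mp hAB u
    simpa using this
  have hya : C ∘L y - y ∘L A =
      (C ∘L Bs - Bs ∘L A) ∘L (B ∘L Bs) + (Bs ∘L B) ∘L (C ∘L Bs - Bs ∘L A) := by
    ext x
    simp only [hy, ContinuousLinearMap.comp_apply, ContinuousLinearMap.sub_apply,
      ContinuousLinearMap.add_apply, map_sub]
    rw [hABpt (Bs x)]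
    abel
  have hyb : y - (C ∘L (adjoint C ∘L Bs) - (adjoint C ∘L Bs) ∘L A) =
      ((adjoint B ∘L B + adjoint C ∘L C) - C ∘L adjoint C) ∘L Bs -
        adjoint C ∘L (C ∘L Bs - Bs ∘L A) := by
    ext x
    simp only [hy, hBs, ContinuousLinearMap.comp_apply, ContinuousLinearMap.sub_apply,
      ContinuousLinearMap.add_apply, map_sub, map_add]
    abel
  have hycpt : IsCompactOperator ⇑y := by
    apply hH
    · rw [hya, ContinuousLinearMap.coe_add']
      refine IsCompactOperator.add ?_ ?_
      · rw [coe_comp']; exact hK1.comp_clm _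
      · rw [coe_comp']; exact hK1.clm_comp _
    · refine ⟨adjoint C ∘L Bs, ?_⟩
      rw [hyb, ContinuousLinearMap.coe_sub']
      refine IsCompactOperator.sub ?_ ?_
      · rw [coe_comp']; exact hK2.comp_clm _
      · rw [coe_comp']; exact hK1.clm_comp _
  -- deduce compactness of B
  have hBBs : IsCompactOperator ⇑(B ∘L Bs) := by
    apply isCompactOperator_of_adjoint_comp
    have hadj : adjoint (B ∘L Bs) = B ∘L Bs := by
      rw [adjoint_comp, hBs, adjoint_adjoint]
    rw [hadj, comp_assoc, ← hy, coe_comp']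
    exact hycpt.clm_comp B
  have hBscpt : IsCompactOperator ⇑Bs := by
    apply isCompactOperator_of_adjoint_comp
    rw [hBs, adjoint_adjoint]
    exact hBBs
  have hBcpt : IsCompactOperator ⇑B := by
    apply isCompactOperator_of_adjoint_comp
    rw [coe_comp']
    exact hBscpt.comp_clm B
  refine ⟨hBcpt, ?_, ?_⟩
  · have heq : adjoint A ∘L A - A ∘L adjoint A =
        (adjoint A ∘L A - (A ∘L adjoint A + B ∘L adjoint B)) + B ∘L adjoint B := by
      abel
    rw [heq, ContinuousLinearMap.coe_add']
    exact hK3.add hBBs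
  · have heq : adjoint C ∘L C - C ∘L adjoint C =
        ((adjoint B ∘L B + adjoint C ∘L C) - C ∘L adjoint C) - adjoint B ∘L B := by
      abel
    have hBsB : IsCompactOperator ⇑(adjoint B ∘L B) := by
      rw [coe_comp']
      exact hBscpt.comp_clm B
    rw [heq, ContinuousLinearMap.coe_sub']
    exact hK2.sub hBsB
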